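/- arXiv:2108.12278 — 6 statements merged into one kernel-verified Lean document; each statement's English description precedes it below -/
import Mathlib

section
/- For any classifier h ∈ H, any target probability measure μ on X with true labeling function f* : X → Y, any source probability measure ν on X with labeling function g : X → Y, any h_i ∈ H minimizing the risk R(·, μ, f*) over H, and any h̃ ∈ H minimizing the risk R(·, ν, g) over H, the target risk satisfies R(h, μ, f*) ≤ R'(h, h̃, ν) + Ψ(μ, ν) + σ, where the optimal combined error is σ = R'(f*, h_i, μ) + R'(h_i, h̃, ν). -/
open MeasureTheory Finset

/-- `R'(f, g, μ) = ∫ τ(f(x), g(x)) dμ(x)`. -/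
noncomputable def Rp {X Y : Type*} [MeasurableSpace X] (τ : Y → Y → ℝ)
    (f g : X → Y) (μ : Measure X) : ℝ := ∫ x, τ (f x) (g x) ∂μ

/-- Discrepancy distance `Ψ(μ, ν)` w.r.t. loss `τ` and hypothesis class `H`. -/
noncomputable def disc {X Y : Type*} [MeasurableSpace X] (τ : Y → Y → ℝ)
    (H : Set (X → Y)) (μ ν : Measure X) : ℝ :=
  sSup {r : ℝ | ∃ h ∈ H, ∃ h' ∈ H,
    r = |(∫ x, τ (h' x) (h x) ∂μ) - ∫ x, τ (h' x) (h x) ∂ν|}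

/-- Theorem 1: target-risk bound via discrepancy and optimal combined error. -/
theorem target_risk_bound {X Y : Type*} [MeasurableSpace X]
    (τ : Y → Y → ℝ) (M' : ℝ) (hM : 0 < M')
    (hbd : ∀ y y' : Y, 0 ≤ τ y y' ∧ τ y y' ≤ M')
    (hsym : ∀ y y' : Y, τ y y' = τ y' y)
    (htri : ∀ y y' y'' : Y, τ y y'' ≤ τ y y' + τ y' y'')
    (H : Set (X → Y)) (hH : H.Nonempty)
    (μ ν : Measure X) [IsProbabilityMeasure μ] [IsProbabilityMeasure ν]
    (fstar gl : X → Y)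
    (hMeas : ∀ f ∈ H ∪ {fstar, gl}, ∀ g ∈ H ∪ {fstar, gl},
      Measurable fun x => τ (f x) (g x))
    (h hi htil : X → Y) (hhH : h ∈ H) (hiH : hi ∈ H) (htilH : htil ∈ H)
    (hiMin : ∀ h' ∈ H, Rp τ hi fstar μ ≤ Rp τ h' fstar μ)
    (htilMin : ∀ h' ∈ H, Rp τ htil gl ν ≤ Rp τ h' gl ν) :
    Rp τ h fstar μ ≤
      Rp τ h htil ν + disc τ H μ ν + (Rp τ fstar hi μ + Rp τ hi htil ν) := by
  have hmemH : ∀ f, f ∈ H → f ∈ H ∪ {fstar, gl} := fun f hf => Or.inl hf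
  have hfs : fstar ∈ H ∪ {fstar, gl} := Or.inr (Or.inl rfl)
  -- integrability of any pair from the allowed set w.r.t. a probability measure
  have hInt : ∀ (f g : X → Y), f ∈ H ∪ {fstar, gl} → g ∈ H ∪ {fstar, gl} →
      ∀ (m : Measure X) [IsProbabilityMeasure m],
      Integrable (fun x => τ (f x) (g x)) m := by
    intro f g hf hg m _
    refine Integrable.mono' (integrable_const M')
      ((hMeas f hf g hg).aestronglyMeasurable) ?_
    filter_upwards with x
    rw [Real.norm_eq_abs, abs_of_nonneg (hbd _ _).1]
    exact (hbd _ _).2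
  -- bounds on integrals
  have hIntNonneg : ∀ (f g : X → Y) (m : Measure X),
      (0:ℝ) ≤ ∫ x, τ (f x) (g x) ∂m := by
    intro f g m
    exact integral_nonneg fun x => (hbd _ _).1
  have hIntLe : ∀ (f g : X → Y), f ∈ H ∪ {fstar, gl} → g ∈ H ∪ {fstar, gl} →
      ∀ (m : Measure X) [IsProbabilityMeasure m],
      (∫ x, τ (f x) (g x) ∂m) ≤ M' := by
    intro f g hf hg m _
    calc (∫ x, τ (f x) (g x) ∂m) ≤ ∫ _x, M' ∂m :=
          integral_mono (hInt f g hf hg m) (integrable_const M') fun x => (hbd _ _).2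
      _ = M' := by simp
  -- the disc step
  have hBdd : BddAbove {r : ℝ | ∃ a ∈ H, ∃ h' ∈ H,
      r = |(∫ x, τ (h' x) (a x) ∂μ) - ∫ x, τ (h' x) (a x) ∂ν|} := by
    refine ⟨M', ?_⟩
    rintro r ⟨a, haH, h', hh'H, rfl⟩
    rw [abs_sub_le_iff]
    constructor
    · linarith [hIntLe h' a (hmemH _ hh'H) (hmemH _ haH) μ,
        hIntNonneg h' a ν]
    · linarith [hIntLe h' a (hmemH _ hh'H) (hmemH _ haH) ν,
        hIntNonneg h' a μ]
  have hdisc : (∫ x, τ (h x) (hi x) ∂μ) - (∫ x, τ (h x) (hi x) ∂ν)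
      ≤ disc τ H μ ν := by
    have hmem : |(∫ x, τ (h x) (hi x) ∂μ) - ∫ x, τ (h x) (hi x) ∂ν| ∈
        {r : ℝ | ∃ a ∈ H, ∃ h' ∈ H,
          r = |(∫ x, τ (h' x) (a x) ∂μ) - ∫ x, τ (h' x) (a x) ∂ν|} :=
      ⟨hi, hiH, h, hhH, rfl⟩
    exact le_trans (le_abs_self _) (le_csSup hBdd hmem)
  -- triangle inequalities on integrals
  have step1 : Rp τ h fstar μ ≤ (∫ x, τ (h x) (hi x) ∂μ) + Rp τ hi fstar μ := by
    unfold Rp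
    rw [← integral_add (hInt h hi (hmemH _ hhH) (hmemH _ hiH) μ)
      (hInt hi fstar (hmemH _ hiH) hfs μ)]
    exact integral_mono (hInt h fstar (hmemH _ hhH) hfs μ)
      ((hInt h hi (hmemH _ hhH) (hmemH _ hiH) μ).add
        (hInt hi fstar (hmemH _ hiH) hfs μ)) fun x => htri _ _ _
  have step2 : (∫ x, τ (h x) (hi x) ∂ν) ≤ Rp τ h htil ν + Rp τ hi htil ν := by
    unfold Rp
    have hsymInt : (∫ x, τ (htil x) (hi x) ∂ν) = ∫ x, τ (hi x) (htil x) ∂ν := by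
      simp_rw [hsym]
    calc (∫ x, τ (h x) (hi x) ∂ν)
        ≤ ∫ x, (τ (h x) (htil x) + τ (htil x) (hi x)) ∂ν :=
          integral_mono (hInt h hi (hmemH _ hhH) (hmemH _ hiH) ν)
            ((hInt h htil (hmemH _ hhH) (hmemH _ htilH) ν).add
              (hInt htil hi (hmemH _ htilH) (hmemH _ hiH) ν)) fun x => htri _ _ _
      _ = (∫ x, τ (h x) (htil x) ∂ν) + ∫ x, τ (htil x) (hi x) ∂ν :=
          integral_add (hInt h htil (hmemH _ hhH) (hmemH _ htilH) ν)
            (hInt htil hi (hmemH _ htilH) (hmemH _ hiH) ν)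
      _ = (∫ x, τ (h x) (htil x) ∂ν) + ∫ x, τ (hi x) (htil x) ∂ν := by rw [hsymInt]
  have hsymμ : Rp τ hi fstar μ = Rp τ fstar hi μ := by
    unfold Rp; simp_rw [hsym]
  linarith [step1, step2, hdisc]
end

section
/- Let t ≥ 1. For each task i ∈ {1, …, t} let μ_i^{(0)}, μ_i^{(1)}, …, μ_i^{(t−i+1)} be probability measures on X, where μ_i^{(0)} is the marginal of the target distribution of task i and μ_i^{(k)} is the marginal of its source distribution after k rounds of generative-replay refinement; for each 0 ≤ k ≤ t−i+1 let f_i^{(k)} : X → Y be the true labeling function of μ_i^{(k)} and let h_i^{(k)} ∈ H minimize the risk R(·, μ_i^{(k)}, f_i^{(k)}) over H. Then for every classifier h ∈ H, the total accumulated error after learning all t tasks satisfies Σ_{i=1}^{t} R(h, μ_i^{(0)}, f_i^{(0)}) ≤ Σ_{i=1}^{t} [ R'(h, h_i^{(t−i+1)}, μ_i^{(t−i+1)}) + Σ_{k=0}^{t−i} ( Ψ(μ_i^{(k)}, μ_i^{(k+1)}) + σ_{i,k} ) ], where σ_{i,k} = R'(h_i^{(k)}, f_i^{(k)}, μ_i^{(k)})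 + R'(h_i^{(k)}, h_i^{(k+1)}, μ_i^{(k+1)}). -/
open MeasureTheory Finset

/-- Lemma 1: total accumulated-error bound after learning `t` tasks
with a single model trained via generative replay. -/
theorem total_accumulated_error_bound {X Y : Type*} [MeasurableSpace X]
    (τ : Y → Y → ℝ) (M' : ℝ) (hM : 0 < M')
    (hbd : ∀ y y' : Y, 0 ≤ τ y y' ∧ τ y y' ≤ M')
    (hsym : ∀ y y' : Y, τ y y' = τ y' y)
    (htri : ∀ y y' y'' : Y, τ y y'' ≤ τ y y' + τ y' y'')
    (H : Set (X → Y)) (hH : H.Nonempty)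
    (t : ℕ) (ht : 1 ≤ t)
    (μ : ℕ → ℕ → Measure X)
    (hprob : ∀ i ∈ Finset.Icc 1 t, ∀ k ≤ t - i + 1, IsProbabilityMeasure (μ i k))
    (f : ℕ → ℕ → X → Y) (hc : ℕ → ℕ → X → Y)
    (hcH : ∀ i ∈ Finset.Icc 1 t, ∀ k ≤ t - i + 1, hc i k ∈ H)
    (hcMin : ∀ i ∈ Finset.Icc 1 t, ∀ k ≤ t - i + 1, ∀ h' ∈ H,
      Rp τ (hc i k) (f i k) (μ i k) ≤ Rp τ h' (f i k) (μ i k))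
    (hMeas : ∀ p q : X → Y,
      (p ∈ H ∨ ∃ i k, p = f i k) → (q ∈ H ∨ ∃ i k, q = f i k) →
      Measurable fun x => τ (p x) (q x))
    (h : X → Y) (hhH : h ∈ H) :
    ∑ i ∈ Finset.Icc 1 t, Rp τ h (f i 0) (μ i 0) ≤
      ∑ i ∈ Finset.Icc 1 t,
        (Rp τ h (hc i (t - i + 1)) (μ i (t - i + 1)) +
          ∑ k ∈ Finset.range (t - i + 1),
            (disc τ H (μ i k) (μ i (k + 1)) +
              (Rp τ (hc i k) (f i k) (μ i k) +
                Rp τ (hc i k) (hc i (k + 1)) (μ i (k + 1))))) := by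
  -- generic facts
  have hnn : ∀ (p q : X → Y) (ν : Measure X), 0 ≤ Rp τ p q ν := fun p q ν =>
    integral_nonneg fun x => (hbd _ _).1
  have integ : ∀ (p q : X → Y), Measurable (fun x => τ (p x) (q x)) →
      ∀ ν : Measure X, IsProbabilityMeasure ν →
      Integrable (fun x => τ (p x) (q x)) ν := by
    intro p q hm ν hν
    refine (integrable_const M').mono' hm.aestronglyMeasurable ?_
    filter_upwards with x
    rw [Real.norm_eq_abs, abs_of_nonneg (hbd _ _).1]
    exact (hbd _ _).2
  have intle : ∀ (p q : X → Y), Measurable (fun x => τ (p x) (q x)) →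
      ∀ ν : Measure X, IsProbabilityMeasure ν →
      (∫ x, τ (p x) (q x) ∂ν) ≤ M' := by
    intro p q hm ν hν
    calc (∫ x, τ (p x) (q x) ∂ν) ≤ ∫ _x, M' ∂ν :=
          integral_mono (integ p q hm ν hν) (integrable_const _) fun x => (hbd _ _).2
      _ = M' := by simp
  apply Finset.sum_le_sum
  intro i hi
  set n := t - i + 1 with hn
  have hprob' : ∀ k ≤ n, IsProbabilityMeasure (μ i k) := fun k hk => hprob i hi k hk
  have hcH' : ∀ k ≤ n, hc i k ∈ H := fun k hk => hcH i hi k hk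
  -- discrepancy step
  have disc_step : ∀ (h1 h2 : X → Y), h1 ∈ H → h2 ∈ H → ∀ k, k + 1 ≤ n →
      (∫ x, τ (h2 x) (h1 x) ∂(μ i k)) ≤
        (∫ x, τ (h2 x) (h1 x) ∂(μ i (k + 1))) + disc τ H (μ i k) (μ i (k + 1)) := by
    intro h1 h2 hh1 hh2 k hk
    have hk' : k ≤ n := le_of_lt (Nat.lt_of_succ_le hk)
    have hbdd : BddAbove {r : ℝ | ∃ a ∈ H, ∃ b ∈ H,
        r = |(∫ x, τ (b x) (a x) ∂(μ i k)) - ∫ x, τ (b x) (a x) ∂(μ i (k + 1))|} := by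
      refine ⟨M', ?_⟩
      rintro r ⟨a, ha, b, hb, rfl⟩
      have hm := hMeas b a (Or.inl hb) (Or.inl ha)
      have h1' := intle b a hm _ (hprob' k hk')
      have h2' := intle b a hm _ (hprob' (k + 1) hk)
      have h3 := integral_nonneg (μ := μ i k) (f := fun x => τ (b x) (a x))
        fun x => (hbd _ _).1
      have h4 := integral_nonneg (μ := μ i (k + 1)) (f := fun x => τ (b x) (a x))
        fun x => (hbd _ _).1
      rw [abs_le]; constructor <;> linarith
    have hmem : |(∫ x, τ (h2 x) (h1 x) ∂(μ i k)) -
        ∫ x, τ (h2 x) (h1 x) ∂(μ i (k + 1))| ≤ disc τ H (μ i k) (μ i (k + 1)) :=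
      le_csSup hbdd ⟨h1, hh1, h2, hh2, rfl⟩
    have := le_abs_self ((∫ x, τ (h2 x) (h1 x) ∂(μ i k)) -
        ∫ x, τ (h2 x) (h1 x) ∂(μ i (k + 1)))
    linarith
  -- triangle for Rp
  have tri : ∀ (p q r : X → Y) (ν : Measure X), IsProbabilityMeasure ν →
      Measurable (fun x => τ (p x) (r x)) →
      Measurable (fun x => τ (p x) (q x)) →
      Measurable (fun x => τ (q x) (r x)) →
      Rp τ p r ν ≤ Rp τ p q ν + Rp τ q r ν := by
    intro p q r ν hν hm1 hm2 hm3
    have i1 := integ p q hm2 ν hν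
    have i2 := integ q r hm3 ν hν
    unfold Rp
    rw [← integral_add i1 i2]
    exact integral_mono (integ p r hm1 ν hν) (i1.add i2) fun x => htri _ _ _
  have mH : ∀ p q : X → Y, p ∈ H → q ∈ H → Measurable fun x => τ (p x) (q x) :=
    fun p q hp hq => hMeas p q (Or.inl hp) (Or.inl hq)
  -- main chain by induction
  have chain : ∀ m, m ≤ n → Rp τ h (hc i 0) (μ i 0) ≤ Rp τ h (hc i m) (μ i m) +
      ∑ k ∈ Finset.range m, (disc τ H (μ i k) (μ i (k + 1)) +
        Rp τ (hc i k) (hc i (k + 1)) (μ i (k + 1))) := by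
    intro m
    induction m with
    | zero => intro _; simp
    | succ m ih =>
      intro hm
      have hm' : m ≤ n := le_of_lt (Nat.lt_of_succ_le hm)
      have step : Rp τ h (hc i m) (μ i m) ≤ Rp τ h (hc i (m + 1)) (μ i (m + 1)) +
          (disc τ H (μ i m) (μ i (m + 1)) +
            Rp τ (hc i m) (hc i (m + 1)) (μ i (m + 1))) := by
        have s1 : Rp τ h (hc i m) (μ i m) ≤ Rp τ h (hc i m) (μ i (m + 1)) +
            disc τ H (μ i m) (μ i (m + 1)) :=
          disc_step (hc i m) h (hcH' m hm') hhH m hm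
        have s2 : Rp τ h (hc i m) (μ i (m + 1)) ≤ Rp τ h (hc i (m + 1)) (μ i (m + 1)) +
            Rp τ (hc i (m + 1)) (hc i m) (μ i (m + 1)) :=
          tri h (hc i (m + 1)) (hc i m) _ (hprob' (m + 1) hm)
            (mH _ _ hhH (hcH' m hm')) (mH _ _ hhH (hcH' (m + 1) hm))
            (mH _ _ (hcH' (m + 1) hm) (hcH' m hm'))
        have s3 : Rp τ (hc i (m + 1)) (hc i m) (μ i (m + 1)) =
            Rp τ (hc i m) (hc i (m + 1)) (μ i (m + 1)) := by
          unfold Rp; congr 1; funext x; exact hsym _ _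
        linarith
      have := ih hm'
      rw [Finset.sum_range_succ]
      linarith
  have hn1 : 1 ≤ n := Nat.le_add_left 1 _
  -- initial triangle
  have init : Rp τ h (f i 0) (μ i 0) ≤ Rp τ h (hc i 0) (μ i 0) +
      Rp τ (hc i 0) (f i 0) (μ i 0) :=
    tri h (hc i 0) (f i 0) _ (hprob' 0 (Nat.zero_le _))
      (hMeas h (f i 0) (Or.inl hhH) (Or.inr ⟨i, 0, rfl⟩))
      (mH _ _ hhH (hcH' 0 (Nat.zero_le _)))
      (hMeas (hc i 0) (f i 0) (Or.inl (hcH' 0 (Nat.zero_le _))) (Or.inr ⟨i, 0, rfl⟩))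
  -- split RHS sum
  have hsplit : ∑ k ∈ Finset.range n, (disc τ H (μ i k) (μ i (k + 1)) +
      (Rp τ (hc i k) (f i k) (μ i k) + Rp τ (hc i k) (hc i (k + 1)) (μ i (k + 1)))) =
      (∑ k ∈ Finset.range n, (disc τ H (μ i k) (μ i (k + 1)) +
        Rp τ (hc i k) (hc i (k + 1)) (μ i (k + 1)))) +
      ∑ k ∈ Finset.range n, Rp τ (hc i k) (f i k) (μ i k) := by
    rw [← Finset.sum_add_distrib]
    apply Finset.sum_congr rfl
    intro k _; ring
  have hsingle : Rp τ (hc i 0) (f i 0) (μ i 0) ≤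
      ∑ k ∈ Finset.range n, Rp τ (hc i k) (f i k) (μ i k) :=
    Finset.single_le_sum (fun k _ => hnn _ _ _)
      (Finset.mem_range.mpr (Nat.lt_of_lt_of_le Nat.zero_lt_one hn1))
  have hch := chain n le_rfl
  rw [hsplit]
  linarith
end

section
/- Suppose a mixture model trained on t tasks has K = t components, so that the source distribution of each task is refined exactly once (no repeated retraining). For each task i ∈ {1, …, t}, let μ_i be the marginal of the target distribution with true labeling function f_i : X → Y, let ν_i be the marginal of its once-refined source distribution with labeling function g_i : X → Y, let h_i ∈ H minimize R(·, μ_i, f_i) over H, and let h̃_i ∈ H minimize R(·, ν_i, g_i) over H. Then for every classifier h ∈ H, the total accumulated error of the mixture model satisfies Σ_{i=1}^{t} R(h, μ_i, f_i) ≤ Σ_{i=1}^{t} [ R'(h, h̃_i, ν_i) + Ψ(μ_i, ν_i) + σ_i ], where σ_i = R'(f_i, h_i, μ_i) + R'(h_i, h̃_i, ν_i); in particular no forgetting error accumulates across tasks. -/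
open MeasureTheory Finset

section Aux
variable {X Y : Type*} [MeasurableSpace X]

lemma aux_integrable (τ : Y → Y → ℝ) (M' : ℝ)
    (hbd : ∀ y y' : Y, 0 ≤ τ y y' ∧ τ y y' ≤ M') (p q : X → Y) (μ : Measure X)
    [IsFiniteMeasure μ] (hm : Measurable fun x => τ (p x) (q x)) :
    Integrable (fun x => τ (p x) (q x)) μ :=
  (integrable_const M').mono' hm.aestronglyMeasurable
    (Filter.Eventually.of_forall fun x => by
      rw [Real.norm_eq_abs, abs_of_nonneg (hbd _ _).1]; exact (hbd _ _).2)

lemma aux_int_bounds (τ : Y → Y → ℝ) (M' : ℝ)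
    (hbd : ∀ y y' : Y, 0 ≤ τ y y' ∧ τ y y' ≤ M') (p q : X → Y) (μ : Measure X)
    [IsProbabilityMeasure μ] :
    0 ≤ (∫ x, τ (p x) (q x) ∂μ) ∧ (∫ x, τ (p x) (q x) ∂μ) ≤ M' := by
  constructor
  · exact integral_nonneg fun x => (hbd _ _).1
  · have := integral_mono_of_nonneg (μ := μ)
      (Filter.Eventually.of_forall fun x => (hbd (p x) (q x)).1)
      (integrable_const M')
      (Filter.Eventually.of_forall fun x => (hbd (p x) (q x)).2)
    simpa using this

lemma aux_disc_le (τ : Y → Y → ℝ) (M' : ℝ)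
    (hbd : ∀ y y' : Y, 0 ≤ τ y y' ∧ τ y y' ≤ M')
    (H : Set (X → Y)) (μ ν : Measure X)
    [IsProbabilityMeasure μ] [IsProbabilityMeasure ν]
    (p q : X → Y) (hp : p ∈ H) (hq : q ∈ H) :
    (∫ x, τ (q x) (p x) ∂μ) - (∫ x, τ (q x) (p x) ∂ν) ≤ disc τ H μ ν := by
  have hbdd : BddAbove {r : ℝ | ∃ h ∈ H, ∃ h' ∈ H,
      r = |(∫ x, τ (h' x) (h x) ∂μ) - ∫ x, τ (h' x) (h x) ∂ν|} := by
    refine ⟨M', fun r hr => ?_⟩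
    obtain ⟨a, ha, b, hb, rfl⟩ := hr
    have h1 := aux_int_bounds τ M' hbd b a μ
    have h2 := aux_int_bounds τ M' hbd b a ν
    exact abs_sub_le_iff.2 ⟨by linarith [h1.2, h2.1], by linarith [h2.2, h1.1]⟩
  have hmem : |(∫ x, τ (q x) (p x) ∂μ) - ∫ x, τ (q x) (p x) ∂ν| ∈
      {r : ℝ | ∃ h ∈ H, ∃ h' ∈ H,
        r = |(∫ x, τ (h' x) (h x) ∂μ) - ∫ x, τ (h' x) (h x) ∂ν|} :=
    ⟨p, hp, q, hq, rfl⟩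
  exact (le_abs_self _).trans (le_csSup hbdd hmem)

lemma aux_tri (τ : Y → Y → ℝ) (M' : ℝ)
    (hbd : ∀ y y' : Y, 0 ≤ τ y y' ∧ τ y y' ≤ M')
    (htri : ∀ y y' y'' : Y, τ y y'' ≤ τ y y' + τ y' y'')
    (p q r : X → Y) (μ : Measure X)
    (hpq : Integrable (fun x => τ (p x) (q x)) μ)
    (hqr : Integrable (fun x => τ (q x) (r x)) μ) :
    (∫ x, τ (p x) (r x) ∂μ) ≤ (∫ x, τ (p x) (q x) ∂μ) + ∫ x, τ (q x) (r x) ∂μ := by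
  rw [← integral_add hpq hqr]
  exact integral_mono_of_nonneg (Filter.Eventually.of_forall fun x => (hbd _ _).1)
    (hpq.add hqr) (Filter.Eventually.of_forall fun x => htri _ _ _)

lemma aux_sym (τ : Y → Y → ℝ) (hsym : ∀ y y' : Y, τ y y' = τ y' y)
    (p q : X → Y) (μ : Measure X) :
    (∫ x, τ (p x) (q x) ∂μ) = ∫ x, τ (q x) (p x) ∂μ :=
  integral_congr_ae (Filter.Eventually.of_forall fun x => hsym _ _)

end Aux

/-- Lemma 2: risk bound for the mixture model with `K = t` components,
so each task's source distribution is refined exactly once and no forgetting error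
accumulates across tasks. -/
theorem mixture_no_forgetting_bound {X Y : Type*} [MeasurableSpace X]
    (τ : Y → Y → ℝ) (M' : ℝ) (hM : 0 < M')
    (hbd : ∀ y y' : Y, 0 ≤ τ y y' ∧ τ y y' ≤ M')
    (hsym : ∀ y y' : Y, τ y y' = τ y' y)
    (htri : ∀ y y' y'' : Y, τ y y'' ≤ τ y y' + τ y' y'')
    (H : Set (X → Y)) (hH : H.Nonempty)
    (t : ℕ) (ht : 1 ≤ t)
    (μ ν : ℕ → Measure X)
    (hprobμ : ∀ i ∈ Finset.Icc 1 t, IsProbabilityMeasure (μ i))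
    (hprobν : ∀ i ∈ Finset.Icc 1 t, IsProbabilityMeasure (ν i))
    (f g : ℕ → X → Y) (hc htc : ℕ → X → Y)
    (hcH : ∀ i ∈ Finset.Icc 1 t, hc i ∈ H)
    (hcMin : ∀ i ∈ Finset.Icc 1 t, ∀ h' ∈ H,
      Rp τ (hc i) (f i) (μ i) ≤ Rp τ h' (f i) (μ i))
    (htcH : ∀ i ∈ Finset.Icc 1 t, htc i ∈ H)
    (htcMin : ∀ i ∈ Finset.Icc 1 t, ∀ h' ∈ H,
      Rp τ (htc i) (g i) (ν i) ≤ Rp τ h' (g i) (ν i))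
    (hMeas : ∀ p q : X → Y,
      (p ∈ H ∨ (∃ i, p = f i) ∨ (∃ i, p = g i)) →
      (q ∈ H ∨ (∃ i, q = f i) ∨ (∃ i, q = g i)) →
      Measurable fun x => τ (p x) (q x))
    (h : X → Y) (hhH : h ∈ H) :
    ∑ i ∈ Finset.Icc 1 t, Rp τ h (f i) (μ i) ≤
      ∑ i ∈ Finset.Icc 1 t,
        (Rp τ h (htc i) (ν i) + disc τ H (μ i) (ν i) +
          (Rp τ (f i) (hc i) (μ i) + Rp τ (hc i) (htc i) (ν i))) := by
  refine Finset.sum_le_sum fun i hi => ?_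
  haveI := hprobμ i hi
  haveI := hprobν i hi
  have hAH := hcH i hi
  have hBH := htcH i hi
  have mhA := hMeas h (hc i) (Or.inl hhH) (Or.inl hAH)
  have mAf := hMeas (hc i) (f i) (Or.inl hAH) (Or.inr (Or.inl ⟨i, rfl⟩))
  have mhB := hMeas h (htc i) (Or.inl hhH) (Or.inl hBH)
  have mBA := hMeas (htc i) (hc i) (Or.inl hBH) (Or.inl hAH)
  have ihA := aux_integrable τ M' hbd h (hc i) (μ i) mhA
  have iAf := aux_integrable τ M' hbd (hc i) (f i) (μ i) mAf
  have ihB := aux_integrable τ M' hbd h (htc i) (ν i) mhB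
  have iBA := aux_integrable τ M' hbd (htc i) (hc i) (ν i) mBA
  have step1 : Rp τ h (f i) (μ i) ≤
      (∫ x, τ (h x) (hc i x) ∂(μ i)) + ∫ x, τ (hc i x) (f i x) ∂(μ i) :=
    aux_tri τ M' hbd htri h (hc i) (f i) (μ i) ihA iAf
  have step2 : (∫ x, τ (h x) (hc i x) ∂(μ i)) ≤
      (∫ x, τ (h x) (hc i x) ∂(ν i)) + disc τ H (μ i) (ν i) := by
    have := aux_disc_le τ M' hbd H (μ i) (ν i) (hc i) h hAH hhH
    linarith
  have step3 : (∫ x, τ (h x) (hc i x) ∂(ν i)) ≤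
      (∫ x, τ (h x) (htc i x) ∂(ν i)) + ∫ x, τ (htc i x) (hc i x) ∂(ν i) :=
    aux_tri τ M' hbd htri h (htc i) (hc i) (ν i) ihB iBA
  have e1 : (∫ x, τ (hc i x) (f i x) ∂(μ i)) = Rp τ (f i) (hc i) (μ i) :=
    aux_sym τ hsym (hc i) (f i) (μ i)
  have e2 : (∫ x, τ (htc i x) (hc i x) ∂(ν i)) = Rp τ (hc i) (htc i) (ν i) :=
    aux_sym τ hsym (htc i) (hc i) (ν i)
  simp only [Rp] at *
  linarith
end

section
/- Let t > 1 and partition the task indices {1, …, t} into two disjoint sets B (tasks whose source distribution is refined exactly once) and B' (tasks retrained more than once), with each task i ∈ B' assigned a retraining count b̂_i ≥ 1 (the task was retrained b̂_i − 1 times). For each i ∈ B, let μ_i be its target marginal with true labeling f_i, ν_i its once-refined source marginal with labeling g_i, h_i ∈ H a minimizer of R(·, μ_i, f_i) over H, and h̃_i ∈ H a minimizer of R(·, ν_i, g_i) over H. For each i ∈ B', let μ_i^{(0)}, …, μ_i^{(b̂_i)} be the chain of marginals (μ_i^{(0)} the target marginal, μ_i^{(k)} the k-times-refined source marginal), with true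 labeling functions f_i^{(k)} and minimizers h_i^{(k)} ∈ H of R(·, μ_i^{(k)}, f_i^{(k)}) over H. Then for every classifier h ∈ H: Σ_{i=1}^{t} R(h, target of task i) ≤ Σ_{i ∈ B} [ R'(h, h̃_i, ν_i) + Ψ(μ_i, ν_i) + R'(f_i, h_i, μ_i) + R'(h_i, h̃_i, ν_i) ] + Σ_{i ∈ B'} [ R'(h, h_i^{(b̂_i)}, μ_i^{(b̂_i)}) + Σ_{k=0}^{b̂_i−1} ( Ψ(μ_i^{(k)}, μ_i^{(k+1)}) + R'(h_i^{(k)}, f_i^{(k)}, μ_i^{(k)}) + R'(h_i^{(k)}, h_i^{(k+1)}, μ_i^{(k+1)}) ) ]; the right-hand side is the mixture-model risk bound R_mixture. -/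
open MeasureTheory Finset

/-- Lemma 3: mixture-model risk bound `R_mixture` where the tasks are
partitioned into a set `B` of tasks refined exactly once and a set `B'` of tasks
retrained more than once, with retraining counts `bhat`. -/
theorem mixture_risk_bound {X Y : Type*} [MeasurableSpace X]
    (τ : Y → Y → ℝ) (M' : ℝ) (hM : 0 < M')
    (hbd : ∀ y y' : Y, 0 ≤ τ y y' ∧ τ y y' ≤ M')
    (hsym : ∀ y y' : Y, τ y y' = τ y' y)
    (htri : ∀ y y' y'' : Y, τ y y'' ≤ τ y y' + τ y' y'')
    (H : Set (X → Y)) (hH : H.Nonempty)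
    (t : ℕ) (ht : 1 < t)
    (B B' : Finset ℕ) (hdisj : Disjoint B B') (hunion : B ∪ B' = Finset.Icc 1 t)
    (bhat : ℕ → ℕ) (hbhat : ∀ i ∈ B', 1 ≤ bhat i)
    -- data for the tasks in `B` (refined exactly once)
    (μ ν : ℕ → Measure X)
    (hprobμ : ∀ i ∈ B, IsProbabilityMeasure (μ i))
    (hprobν : ∀ i ∈ B, IsProbabilityMeasure (ν i))
    (f g : ℕ → X → Y) (hc htc : ℕ → X → Y)
    (hcH : ∀ i ∈ B, hc i ∈ H)
    (hcMin : ∀ i ∈ B, ∀ h' ∈ H,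
      Rp τ (hc i) (f i) (μ i) ≤ Rp τ h' (f i) (μ i))
    (htcH : ∀ i ∈ B, htc i ∈ H)
    (htcMin : ∀ i ∈ B, ∀ h' ∈ H,
      Rp τ (htc i) (g i) (ν i) ≤ Rp τ h' (g i) (ν i))
    -- data for the tasks in `B'` (retrained more than once): chains of refinements
    (μ' : ℕ → ℕ → Measure X)
    (hprobμ' : ∀ i ∈ B', ∀ k ≤ bhat i, IsProbabilityMeasure (μ' i k))
    (f' : ℕ → ℕ → X → Y) (hc' : ℕ → ℕ → X → Y)
    (hc'H : ∀ i ∈ B', ∀ k ≤ bhat i, hc' i k ∈ H)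
    (hc'Min : ∀ i ∈ B', ∀ k ≤ bhat i, ∀ h' ∈ H,
      Rp τ (hc' i k) (f' i k) (μ' i k) ≤ Rp τ h' (f' i k) (μ' i k))
    (hMeas : ∀ p q : X → Y,
      (p ∈ H ∨ (∃ i, p = f i) ∨ (∃ i, p = g i) ∨ (∃ i k, p = f' i k)) →
      (q ∈ H ∨ (∃ i, q = f i) ∨ (∃ i, q = g i) ∨ (∃ i k, q = f' i k)) →
      Measurable fun x => τ (p x) (q x))
    (h : X → Y) (hhH : h ∈ H) :
    ((∑ i ∈ B, Rp τ h (f i) (μ i)) + ∑ i ∈ B', Rp τ h (f' i 0) (μ' i 0)) ≤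
      (∑ i ∈ B,
        (Rp τ h (htc i) (ν i) + disc τ H (μ i) (ν i) +
          (Rp τ (f i) (hc i) (μ i) + Rp τ (hc i) (htc i) (ν i)))) +
      ∑ i ∈ B',
        (Rp τ h (hc' i (bhat i)) (μ' i (bhat i)) +
          ∑ k ∈ Finset.range (bhat i),
            (disc τ H (μ' i k) (μ' i (k + 1)) +
              (Rp τ (hc' i k) (f' i k) (μ' i k) +
                Rp τ (hc' i k) (hc' i (k + 1)) (μ' i (k + 1))))) := by
  classical
  -- basic facts
  have hnn : ∀ (p q : X → Y) (m : Measure X), 0 ≤ Rp τ p q m := fun p q m =>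
    integral_nonneg fun x => (hbd _ _).1
  have hint : ∀ (p q : X → Y), Measurable (fun x => τ (p x) (q x)) →
      ∀ (m : Measure X), IsProbabilityMeasure m →
      Integrable (fun x => τ (p x) (q x)) m := by
    intro p q hm m hpm
    exact (integrable_const M').mono' hm.aestronglyMeasurable
      (Filter.Eventually.of_forall fun x => by
        rw [Real.norm_eq_abs, abs_of_nonneg (hbd _ _).1]; exact (hbd _ _).2)
  have hsymRp : ∀ (p q : X → Y) (m : Measure X), Rp τ p q m = Rp τ q p m := by
    intro p q m
    unfold Rp
    exact integral_congr_ae (Filter.Eventually.of_forall fun x => hsym _ _)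
  have htriRp : ∀ (p q r : X → Y) (m : Measure X), IsProbabilityMeasure m →
      Measurable (fun x => τ (p x) (r x)) → Measurable (fun x => τ (p x) (q x)) →
      Measurable (fun x => τ (q x) (r x)) →
      Rp τ p r m ≤ Rp τ p q m + Rp τ q r m := by
    intro p q r m hpm h1 h2 h3
    have hmono :=
      integral_mono (μ := m) (hint p r h1 m hpm)
        ((hint p q h2 m hpm).add (hint q r h3 m hpm)) (fun x => htri _ _ _)
    simpa [Rp, integral_add (hint p q h2 m hpm) (hint q r h3 m hpm)] using hmono
  have hleM : ∀ (p q : X → Y) (m : Measure X), IsProbabilityMeasure m →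
      Measurable (fun x => τ (p x) (q x)) → Rp τ p q m ≤ M' := by
    intro p q m hm hmeas
    calc Rp τ p q m ≤ ∫ _x, M' ∂m :=
          integral_mono (hint p q hmeas m hm) (integrable_const _) (fun x => (hbd _ _).2)
      _ = M' := by simp
  -- discrepancy bound
  have hdisc : ∀ (p q : X → Y), p ∈ H → q ∈ H → ∀ (m m' : Measure X),
      IsProbabilityMeasure m → IsProbabilityMeasure m' →
      Rp τ p q m ≤ Rp τ p q m' + disc τ H m m' := by
    intro p q hp hq m m' hm hm'
    set S : Set ℝ := {r : ℝ | ∃ h ∈ H, ∃ h' ∈ H,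
      r = |(∫ x, τ (h' x) (h x) ∂m) - ∫ x, τ (h' x) (h x) ∂m'|} with hS
    have hmem : |Rp τ p q m - Rp τ p q m'| ∈ S := ⟨q, hq, p, hp, rfl⟩
    have hbdd : BddAbove S := by
      refine ⟨M', fun r hr => ?_⟩
      obtain ⟨a, ha, b, hb, rfl⟩ := hr
      have hmeas : Measurable fun x => τ (b x) (a x) := hMeas b a (Or.inl hb) (Or.inl ha)
      have h1 : (0:ℝ) ≤ ∫ x, τ (b x) (a x) ∂m := integral_nonneg fun x => (hbd _ _).1
      have h2 : (0:ℝ) ≤ ∫ x, τ (b x) (a x) ∂m' := integral_nonneg fun x => (hbd _ _).1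
      have h3 := hleM b a m hm hmeas
      have h4 := hleM b a m' hm' hmeas
      unfold Rp at h3 h4
      rw [abs_le]
      constructor <;> linarith
    have hle := le_csSup hbdd hmem
    have h2 : Rp τ p q m - Rp τ p q m' ≤ |Rp τ p q m - Rp τ p q m'| := le_abs_self _
    unfold disc Rp
    rw [← hS]
    unfold Rp at h2 hle
    linarith
  -- part B
  have hB : ∀ i ∈ B, Rp τ h (f i) (μ i) ≤
      Rp τ h (htc i) (ν i) + disc τ H (μ i) (ν i) +
        (Rp τ (f i) (hc i) (μ i) + Rp τ (hc i) (htc i) (ν i)) := by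
    intro i hi
    have mh : h ∈ H ∨ (∃ j, h = f j) ∨ (∃ j, h = g j) ∨ (∃ j k, h = f' j k) := Or.inl hhH
    have mhc : hc i ∈ H ∨ (∃ j, hc i = f j) ∨ (∃ j, hc i = g j) ∨ (∃ j k, hc i = f' j k) :=
      Or.inl (hcH i hi)
    have mhtc : htc i ∈ H ∨ (∃ j, htc i = f j) ∨ (∃ j, htc i = g j) ∨
        (∃ j k, htc i = f' j k) := Or.inl (htcH i hi)
    have mf : f i ∈ H ∨ (∃ j, f i = f j) ∨ (∃ j, f i = g j) ∨ (∃ j k, f i = f' j k) :=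
      Or.inr (Or.inl ⟨i, rfl⟩)
    have s1 : Rp τ h (f i) (μ i) ≤ Rp τ h (hc i) (μ i) + Rp τ (hc i) (f i) (μ i) :=
      htriRp h (hc i) (f i) (μ i) (hprobμ i hi) (hMeas _ _ mh mf) (hMeas _ _ mh mhc)
        (hMeas _ _ mhc mf)
    have s2 : Rp τ h (hc i) (μ i) ≤ Rp τ h (hc i) (ν i) + disc τ H (μ i) (ν i) :=
      hdisc h (hc i) hhH (hcH i hi) (μ i) (ν i) (hprobμ i hi) (hprobν i hi)
    have s3 : Rp τ h (hc i) (ν i) ≤ Rp τ h (htc i) (ν i) + Rp τ (htc i) (hc i) (ν i) :=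
      htriRp h (htc i) (hc i) (ν i) (hprobν i hi) (hMeas _ _ mh mhc) (hMeas _ _ mh mhtc)
        (hMeas _ _ mhtc mhc)
    rw [hsymRp (htc i) (hc i)] at s3
    rw [hsymRp (hc i) (f i)] at s1
    linarith
  -- part B' : telescoping chain
  have key : ∀ i ∈ B', ∀ n, n ≤ bhat i →
      Rp τ h (hc' i 0) (μ' i 0) ≤ Rp τ h (hc' i n) (μ' i n) +
        ∑ k ∈ Finset.range n,
          (disc τ H (μ' i k) (μ' i (k + 1)) + Rp τ (hc' i k) (hc' i (k + 1)) (μ' i (k + 1))) := by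
    intro i hi n
    induction n with
    | zero => intro _; simp
    | succ n ih =>
      intro hn
      have hn' : n ≤ bhat i := Nat.le_of_succ_le hn
      have mh : h ∈ H ∨ (∃ j, h = f j) ∨ (∃ j, h = g j) ∨ (∃ j k, h = f' j k) := Or.inl hhH
      have mn : hc' i n ∈ H ∨ (∃ j, hc' i n = f j) ∨ (∃ j, hc' i n = g j) ∨
          (∃ j k, hc' i n = f' j k) := Or.inl (hc'H i hi n hn')
      have mn1 : hc' i (n+1) ∈ H ∨ (∃ j, hc' i (n+1) = f j) ∨ (∃ j, hc' i (n+1) = g j) ∨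
          (∃ j k, hc' i (n+1) = f' j k) := Or.inl (hc'H i hi (n+1) hn)
      have s1 : Rp τ h (hc' i n) (μ' i n) ≤
          Rp τ h (hc' i n) (μ' i (n+1)) + disc τ H (μ' i n) (μ' i (n+1)) :=
        hdisc h (hc' i n) hhH (hc'H i hi n hn') _ _ (hprobμ' i hi n hn')
          (hprobμ' i hi (n+1) hn)
      have s2 : Rp τ h (hc' i n) (μ' i (n+1)) ≤
          Rp τ h (hc' i (n+1)) (μ' i (n+1)) + Rp τ (hc' i (n+1)) (hc' i n) (μ' i (n+1)) :=
        htriRp h (hc' i (n+1)) (hc' i n) _ (hprobμ' i hi (n+1) hn)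
          (hMeas _ _ mh mn) (hMeas _ _ mh mn1) (hMeas _ _ mn1 mn)
      rw [hsymRp (hc' i (n+1)) (hc' i n)] at s2
      rw [Finset.sum_range_succ]
      have := ih hn'
      linarith
  have hB' : ∀ i ∈ B', Rp τ h (f' i 0) (μ' i 0) ≤
      Rp τ h (hc' i (bhat i)) (μ' i (bhat i)) +
        ∑ k ∈ Finset.range (bhat i),
          (disc τ H (μ' i k) (μ' i (k + 1)) +
            (Rp τ (hc' i k) (f' i k) (μ' i k) +
              Rp τ (hc' i k) (hc' i (k + 1)) (μ' i (k + 1)))) := by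
    intro i hi
    have mh : h ∈ H ∨ (∃ j, h = f j) ∨ (∃ j, h = g j) ∨ (∃ j k, h = f' j k) := Or.inl hhH
    have m0 : hc' i 0 ∈ H ∨ (∃ j, hc' i 0 = f j) ∨ (∃ j, hc' i 0 = g j) ∨
        (∃ j k, hc' i 0 = f' j k) := Or.inl (hc'H i hi 0 (Nat.zero_le _))
    have mf0 : f' i 0 ∈ H ∨ (∃ j, f' i 0 = f j) ∨ (∃ j, f' i 0 = g j) ∨
        (∃ j k, f' i 0 = f' j k) := Or.inr (Or.inr (Or.inr ⟨i, 0, rfl⟩))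
    have s0 : Rp τ h (f' i 0) (μ' i 0) ≤
        Rp τ h (hc' i 0) (μ' i 0) + Rp τ (hc' i 0) (f' i 0) (μ' i 0) :=
      htriRp h (hc' i 0) (f' i 0) _ (hprobμ' i hi 0 (Nat.zero_le _))
        (hMeas _ _ mh mf0) (hMeas _ _ mh m0) (hMeas _ _ m0 mf0)
    have hk := key i hi (bhat i) le_rfl
    have ha0 : Rp τ (hc' i 0) (f' i 0) (μ' i 0) ≤
        ∑ k ∈ Finset.range (bhat i), Rp τ (hc' i k) (f' i k) (μ' i k) :=
      Finset.single_le_sum (f := fun k => Rp τ (hc' i k) (f' i k) (μ' i k))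
        (fun k _ => hnn _ _ _) (Finset.mem_range.mpr (hbhat i hi))
    have hsplit : ∑ k ∈ Finset.range (bhat i),
        (disc τ H (μ' i k) (μ' i (k + 1)) +
          (Rp τ (hc' i k) (f' i k) (μ' i k) +
            Rp τ (hc' i k) (hc' i (k + 1)) (μ' i (k + 1)))) =
        (∑ k ∈ Finset.range (bhat i),
          (disc τ H (μ' i k) (μ' i (k + 1)) +
            Rp τ (hc' i k) (hc' i (k + 1)) (μ' i (k + 1)))) +
        ∑ k ∈ Finset.range (bhat i), Rp τ (hc' i k) (f' i k) (μ' i k) := by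
      rw [← Finset.sum_add_distrib]
      exact Finset.sum_congr rfl fun k _ => by ring
    rw [hsplit]
    linarith
  exact add_le_add (Finset.sum_le_sum hB) (Finset.sum_le_sum hB')
end

section
/- Fix a classifier h ∈ H and t ≥ 1, and for each task i ∈ {1, …, t} fix a chain of probability measures μ_i^{(0)}, μ_i^{(1)}, …, μ_i^{(t−i+1)} on X with labeling functions f_i^{(k)} : X → Y and hypotheses h_i^{(k)} ∈ H for 0 ≤ k ≤ t−i+1, and set σ_{i,k} = R'(h_i^{(k)}, f_i^{(k)}, μ_i^{(k)}) + R'(h_i^{(k)}, h_i^{(k+1)}, μ_i^{(k+1)}). Define the single-model bound R_single = Σ_{i=1}^{t} [ R'(h, h_i^{(t−i+1)}, μ_i^{(t−i+1)}) + Σ_{k=0}^{t−i} ( Ψ(μ_i^{(k)}, μ_i^{(k+1)}) + σ_{i,k} ) ], and, for any choice of truncation points m_i ∈ {1, …, t−i+1} for each task i (m_i = 1 for tasks trained only once, m_i = b̂_i ≤ t−i+1 for tasks retrained b̂_i − 1 times), define the mixture bound R_mixture = Σ_{i=1}^{t} [ R'(h, h_i^{(m_i)}, μ_i^{(m_i)})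 + Σ_{k=0}^{m_i−1} ( Ψ(μ_i^{(k)}, μ_i^{(k+1)}) + σ_{i,k} ) ]. Then R_mixture ≤ R_single. -/
open MeasureTheory Finset

/-- the mixture-model risk bound `R_mixture` (obtained by truncating
each task's refinement chain at `m i`) never exceeds the single-model risk bound
`R_single` (the full chains of length `t - i + 1`). -/
theorem mixture_le_single {X Y : Type*} [MeasurableSpace X]
    (τ : Y → Y → ℝ) (M' : ℝ) (hM : 0 < M')
    (hbd : ∀ y y' : Y, 0 ≤ τ y y' ∧ τ y y' ≤ M')
    (hsym : ∀ y y' : Y, τ y y' = τ y' y)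
    (htri : ∀ y y' y'' : Y, τ y y'' ≤ τ y y' + τ y' y'')
    (H : Set (X → Y)) (hH : H.Nonempty)
    (t : ℕ) (ht : 1 ≤ t)
    (μ : ℕ → ℕ → Measure X)
    (hprob : ∀ i ∈ Finset.Icc 1 t, ∀ k ≤ t - i + 1, IsProbabilityMeasure (μ i k))
    (f : ℕ → ℕ → X → Y) (hc : ℕ → ℕ → X → Y)
    (hcH : ∀ i ∈ Finset.Icc 1 t, ∀ k ≤ t - i + 1, hc i k ∈ H)
    (hMeas : ∀ p q : X → Y,
      (p ∈ H ∨ ∃ i k, p = f i k) → (q ∈ H ∨ ∃ i k, q = f i k) →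
      Measurable fun x => τ (p x) (q x))
    (m : ℕ → ℕ) (hm : ∀ i ∈ Finset.Icc 1 t, 1 ≤ m i ∧ m i ≤ t - i + 1)
    (h : X → Y) (hhH : h ∈ H) :
    ∑ i ∈ Finset.Icc 1 t,
        (Rp τ h (hc i (m i)) (μ i (m i)) +
          ∑ k ∈ Finset.range (m i),
            (disc τ H (μ i k) (μ i (k + 1)) +
              (Rp τ (hc i k) (f i k) (μ i k) +
                Rp τ (hc i k) (hc i (k + 1)) (μ i (k + 1))))) ≤
      ∑ i ∈ Finset.Icc 1 t,
        (Rp τ h (hc i (t - i + 1)) (μ i (t - i + 1)) +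
          ∑ k ∈ Finset.range (t - i + 1),
            (disc τ H (μ i k) (μ i (k + 1)) +
              (Rp τ (hc i k) (f i k) (μ i k) +
                Rp τ (hc i k) (hc i (k + 1)) (μ i (k + 1))))) := by

  apply Finset.sum_le_sum
  intro i hi
  set n := t - i + 1 with hn
  have hprob' : ∀ k ≤ n, IsProbabilityMeasure (μ i k) := fun k hk => hprob i hi k hk
  have hcH' : ∀ k ≤ n, hc i k ∈ H := fun k hk => hcH i hi k hk
  have hmi := hm i hi
  have hInt : ∀ k ≤ n, ∀ p q : X → Y, p ∈ H → q ∈ H →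
      Integrable (fun x => τ (p x) (q x)) (μ i k) := by
    intro k hk p q hp hq
    have := hprob' k hk
    refine ⟨(hMeas p q (Or.inl hp) (Or.inl hq)).aestronglyMeasurable, ?_⟩
    apply MeasureTheory.HasFiniteIntegral.of_bounded (C := M')
    filter_upwards with x
    rw [Real.norm_eq_abs, abs_of_nonneg (hbd _ _).1]
    exact (hbd _ _).2
  have hIntLe : ∀ k ≤ n, ∀ p ∈ H, ∀ q ∈ H,
      (0 ≤ ∫ x, τ (p x) (q x) ∂ μ i k) ∧ (∫ x, τ (p x) (q x) ∂ μ i k) ≤ M' := by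
    intro k hk p hp q hq
    have := hprob' k hk
    constructor
    · exact integral_nonneg fun x => (hbd _ _).1
    · calc (∫ x, τ (p x) (q x) ∂ μ i k) ≤ ∫ _, M' ∂ μ i k :=
            integral_mono (hInt k hk p q hp hq) (integrable_const _) fun x => (hbd _ _).2
        _ = M' := by simp
  have hdisc_ge : ∀ k, k + 1 ≤ n → ∀ p ∈ H, ∀ q ∈ H,
      |(∫ x, τ (q x) (p x) ∂ μ i k) - ∫ x, τ (q x) (p x) ∂ μ i (k+1)| ≤
        disc τ H (μ i k) (μ i (k+1)) := by
    intro k hk p hp q hq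
    apply le_csSup
    · refine ⟨M', ?_⟩
      rintro r ⟨p', hp', q', hq', rfl⟩
      have h1 := hIntLe k (by omega) q' hq' p' hp'
      have h2 := hIntLe (k+1) hk q' hq' p' hp'
      rw [abs_sub_le_iff]
      constructor <;> linarith [h1.1, h1.2, h2.1, h2.2]
    · exact ⟨p, hp, q, hq, rfl⟩
  set A : ℕ → ℝ := fun k => Rp τ h (hc i k) (μ i k) with hA
  set T : ℕ → ℝ := fun k => disc τ H (μ i k) (μ i (k+1)) +
      (Rp τ (hc i k) (f i k) (μ i k) + Rp τ (hc i k) (hc i (k+1)) (μ i (k+1))) with hT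
  have step : ∀ k, k + 1 ≤ n → A k ≤ A (k+1) + T k := by
    intro k hk
    have hk' : k ≤ n := by omega
    have key1 : (∫ x, τ (h x) (hc i k x) ∂ μ i k) ≤
        (∫ x, τ (h x) (hc i k x) ∂ μ i (k+1)) + disc τ H (μ i k) (μ i (k+1)) := by
      have := hdisc_ge k hk (hc i k) (hcH' k hk') h hhH
      have := le_abs_self ((∫ x, τ (h x) (hc i k x) ∂ μ i k) -
        ∫ x, τ (h x) (hc i k x) ∂ μ i (k+1))
      linarith
    have key2 : (∫ x, τ (h x) (hc i k x) ∂ μ i (k+1)) ≤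
        (∫ x, τ (h x) (hc i (k+1) x) ∂ μ i (k+1)) +
        ∫ x, τ (hc i k x) (hc i (k+1) x) ∂ μ i (k+1) := by
      rw [← integral_add (hInt (k+1) hk h (hc i (k+1)) hhH (hcH' _ hk))
        (hInt (k+1) hk (hc i k) (hc i (k+1)) (hcH' k hk') (hcH' _ hk))]
      apply integral_mono (hInt (k+1) hk h (hc i k) hhH (hcH' k hk'))
        ((hInt (k+1) hk h (hc i (k+1)) hhH (hcH' _ hk)).add
          (hInt (k+1) hk (hc i k) (hc i (k+1)) (hcH' k hk') (hcH' _ hk)))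
      intro x
      calc τ (h x) (hc i k x) ≤ τ (h x) (hc i (k+1) x) + τ (hc i (k+1) x) (hc i k x) :=
            htri _ _ _
        _ = τ (h x) (hc i (k+1) x) + τ (hc i k x) (hc i (k+1) x) := by rw [hsym (hc i (k+1) x)]
    have key3 : (0:ℝ) ≤ Rp τ (hc i k) (f i k) (μ i k) :=
      integral_nonneg fun x => (hbd _ _).1
    simp only [hA, hT, Rp] at *
    linarith
  have main : ∀ j, m i ≤ j → j ≤ n → A (m i) ≤ A j + ∑ k ∈ Finset.Ico (m i) j, T k := by
    intro j hj
    induction j, hj using Nat.le_induction with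
    | base => intro _; simp
    | succ j hj ih =>
      intro hjn
      have h1 := ih (by omega)
      have h2 := step j hjn
      rw [Finset.sum_Ico_succ_top hj]
      linarith
  have hfin := main n hmi.2 le_rfl
  have hsplit : ∑ k ∈ Finset.range (m i), T k + ∑ k ∈ Finset.Ico (m i) n, T k =
      ∑ k ∈ Finset.range n, T k := Finset.sum_range_add_sum_Ico T hmi.2
  show A (m i) + ∑ k ∈ Finset.range (m i), T k ≤ A n + ∑ k ∈ Finset.range n, T k
  linarith
end

section
/- For any probability measures μ and ν on X and any classifiers h, h₁, h₂ ∈ H, the one-step transfer inequality holds: R'(h, h₁, μ) ≤ R'(h, h₂, ν) + Ψ(μ, ν) + R'(h₁, h₂, ν). -/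
open MeasureTheory Finset

/-- one-step transfer inequality
`R'(h, h₁, μ) ≤ R'(h, h₂, ν) + Ψ(μ, ν) + R'(h₁, h₂, ν)`. -/
theorem one_step_transfer {X Y : Type*} [MeasurableSpace X]
    (τ : Y → Y → ℝ) (M' : ℝ) (hM : 0 < M')
    (hbd : ∀ y y' : Y, 0 ≤ τ y y' ∧ τ y y' ≤ M')
    (hsym : ∀ y y' : Y, τ y y' = τ y' y)
    (htri : ∀ y y' y'' : Y, τ y y'' ≤ τ y y' + τ y' y'')
    (H : Set (X → Y)) (hH : H.Nonempty)
    (μ ν : Measure X) [IsProbabilityMeasure μ] [IsProbabilityMeasure ν]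
    (hMeas : ∀ p ∈ H, ∀ q ∈ H, Measurable fun x => τ (p x) (q x))
    (h h₁ h₂ : X → Y) (hhH : h ∈ H) (h₁H : h₁ ∈ H) (h₂H : h₂ ∈ H) :
    Rp τ h h₁ μ ≤ Rp τ h h₂ ν + disc τ H μ ν + Rp τ h₁ h₂ ν := by
  have hInt : ∀ (p : X → Y), p ∈ H → ∀ (q : X → Y), q ∈ H → ∀ (κ : Measure X),
      IsProbabilityMeasure κ → Integrable (fun x => τ (p x) (q x)) κ := by
    intro p hp q hq κ hκ
    refine Integrable.mono' (integrable_const M') (hMeas p hp q hq).aestronglyMeasurable ?_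
    filter_upwards with x
    rw [Real.norm_eq_abs, abs_of_nonneg (hbd _ _).1]
    exact (hbd _ _).2
  have hbnd : ∀ (p : X → Y), p ∈ H → ∀ (q : X → Y), q ∈ H → ∀ (κ : Measure X),
      IsProbabilityMeasure κ →
      (0 ≤ ∫ x, τ (p x) (q x) ∂κ ∧ ∫ x, τ (p x) (q x) ∂κ ≤ M') := by
    intro p hp q hq κ hκ
    constructor
    · exact integral_nonneg fun x => (hbd _ _).1
    · calc ∫ x, τ (p x) (q x) ∂κ ≤ ∫ _x, M' ∂κ :=
            integral_mono (hInt p hp q hq κ hκ) (integrable_const M') fun x => (hbd _ _).2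
        _ = M' := by simp
  have hbdd : BddAbove {r : ℝ | ∃ a ∈ H, ∃ h' ∈ H,
      r = |(∫ x, τ (h' x) (a x) ∂μ) - ∫ x, τ (h' x) (a x) ∂ν|} := by
    refine ⟨M', ?_⟩
    rintro r ⟨a, ha, h', hh', rfl⟩
    have h1 := hbnd h' hh' a ha μ ‹_›
    have h2 := hbnd h' hh' a ha ν ‹_›
    rw [abs_sub_le_iff]
    constructor <;> linarith [h1.1, h1.2, h2.1, h2.2]
  have hdisc : Rp τ h h₁ μ - Rp τ h h₁ ν ≤ disc τ H μ ν := by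
    have hmem : |(∫ x, τ (h x) (h₁ x) ∂μ) - ∫ x, τ (h x) (h₁ x) ∂ν| ∈
        {r : ℝ | ∃ a ∈ H, ∃ h' ∈ H,
          r = |(∫ x, τ (h' x) (a x) ∂μ) - ∫ x, τ (h' x) (a x) ∂ν|} :=
      ⟨h₁, h₁H, h, hhH, rfl⟩
    have := le_csSup hbdd hmem
    unfold disc Rp
    exact le_trans (le_abs_self _) this
  have htriInt : Rp τ h h₁ ν ≤ Rp τ h h₂ ν + Rp τ h₁ h₂ ν := by
    have : Rp τ h h₁ ν ≤ Rp τ h h₂ ν + Rp τ h₂ h₁ ν := by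
      unfold Rp
      rw [← integral_add (hInt h hhH h₂ h₂H ν ‹_›) (hInt h₂ h₂H h₁ h₁H ν ‹_›)]
      exact integral_mono (hInt h hhH h₁ h₁H ν ‹_›)
        ((hInt h hhH h₂ h₂H ν ‹_›).add (hInt h₂ h₂H h₁ h₁H ν ‹_›))
        fun x => htri _ _ _
    have heq : Rp τ h₂ h₁ ν = Rp τ h₁ h₂ ν := by
      unfold Rp
      exact integral_congr_ae (Filter.Eventually.of_forall fun x => hsym _ _)
    linarith
  linarith
end
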